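/- Let N be a positive integer, β ∈ ℂ with β ≠ 0, and x̂, ŷ ∈ ℂ^N. Define w ∈ ℂ^N by w_n = β^{−1}·ŷ_n/x̂_n if x̂_n ≠ 0 and w_n = 0 if x̂_n = 0. Then for every v ∈ ℂ^N, ‖β·(w ⊙ x̂) − ŷ‖ ≤ ‖β·(v ⊙ x̂) − ŷ‖, where ⊙ denotes entrywise product and ‖·‖ the Euclidean norm; moreover the minimum value satisfies ‖β·(w ⊙ x̂) − ŷ‖² = Σ_{n : x̂_n = 0} |ŷ_n|². -/

import Mathlib

open Finset

theorem beam_reshaping_optimal_configuration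
    (N : ℕ) (hN : 0 < N) (β : ℂ) (hβ : β ≠ 0)
    (xhat yhat : Fin N → ℂ)
    (w : Fin N → ℂ)
    (hw : ∀ n, w n = if xhat n ≠ 0 then β⁻¹ * yhat n / xhat n else 0) :
    (∀ v : Fin N → ℂ,
        Real.sqrt (∑ n : Fin N, ‖β * (w n * xhat n) - yhat n‖ ^ 2)
          ≤ Real.sqrt (∑ n : Fin N, ‖β * (v n * xhat n) - yhat n‖ ^ 2))
    ∧ (∑ n : Fin N, ‖β * (w n * xhat n) - yhat n‖ ^ 2)
        = ∑ n : Fin N, (if xhat n = 0 then ‖yhat n‖ ^ 2 else 0) := by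
  have hterm : ∀ n, ‖β * (w n * xhat n) - yhat n‖ ^ 2
      = (if xhat n = 0 then ‖yhat n‖ ^ 2 else 0) := by
    intro n
    by_cases hx : xhat n = 0
    · simp [hw n, hx]
    · rw [hw n, if_pos hx]
      have : β * (β⁻¹ * yhat n / xhat n * xhat n) = yhat n := by
        field_simp
      rw [this]
      simp [hx]
  constructor
  · intro v
    apply Real.sqrt_le_sqrt
    apply Finset.sum_le_sum
    intro n _
    rw [hterm n]
    by_cases hx : xhat n = 0
    · simp [hx]
    · simp only [hx, if_false]
      positivity
  · exact Finset.sum_congr rfl fun n _ => hterm n
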